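/- Suppose a recurrence S(n) = O(n log n) + 2·√(n/log² n) · S(√(n·log² n)) holds for a space function S measured in bits, with base case S(m) = O(m log log m) for m ≤ polylog(n). Then S(n) = O(n log log n). -/

import Mathlib

open Real

/-- Number of slabs at each recursion level: `2·⌈√(n / log₂² n)⌉`. -/
noncomputable def slabCount (n : ℕ) : ℕ := ⌈Real.sqrt (n / (Real.logb 2 n) ^ 2)⌉₊

/-- Size of each slab: `⌈√(n · log₂² n)⌉`. -/
noncomputable def slabSize (n : ℕ) : ℕ := ⌈Real.sqrt (n * (Real.logb 2 n) ^ 2)⌉₊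

lemma logb4_le {x : ℝ} (hx : 1 ≤ x) :
    Real.logb 2 x ≤ 6 * Real.sqrt (Real.sqrt x) := by
  have hx0 : (0:ℝ) < x := lt_of_lt_of_le one_pos hx
  have h1 : Real.log x = 4 * Real.log (Real.sqrt (Real.sqrt x)) := by
    rw [Real.log_sqrt (Real.sqrt_nonneg x), Real.log_sqrt hx0.le]; ring
  have hp : (0:ℝ) < Real.sqrt (Real.sqrt x) := Real.sqrt_pos.2 (Real.sqrt_pos.2 hx0)
  have h2 : Real.log (Real.sqrt (Real.sqrt x)) ≤ Real.sqrt (Real.sqrt x) := by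
    linarith [Real.log_le_sub_one_of_pos hp]
  have hl2 : (2:ℝ)/3 ≤ Real.log 2 := by linarith [Real.log_two_gt_d9]
  rw [Real.logb, div_le_iff₀ (by positivity : (0:ℝ) < Real.log 2)]
  nlinarith [mul_nonneg hp.le (by linarith : (0:ℝ) ≤ Real.log 2 - 2/3)]

lemma logb8_le {x : ℝ} (hx : 1 ≤ x) :
    Real.logb 2 x ≤ 12 * Real.sqrt (Real.sqrt (Real.sqrt x)) := by
  have hx0 : (0:ℝ) < x := lt_of_lt_of_le one_pos hx
  have h1 : Real.log x = 8 * Real.log (Real.sqrt (Real.sqrt (Real.sqrt x))) := by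
    rw [Real.log_sqrt (Real.sqrt_nonneg (Real.sqrt x)), Real.log_sqrt (Real.sqrt_nonneg x),
      Real.log_sqrt hx0.le]; ring
  have hp : (0:ℝ) < Real.sqrt (Real.sqrt (Real.sqrt x)) :=
    Real.sqrt_pos.2 (Real.sqrt_pos.2 (Real.sqrt_pos.2 hx0))
  have h2 : Real.log (Real.sqrt (Real.sqrt (Real.sqrt x)))
      ≤ Real.sqrt (Real.sqrt (Real.sqrt x)) := by
    linarith [Real.log_le_sub_one_of_pos hp]
  have hl2 : (2:ℝ)/3 ≤ Real.log 2 := by linarith [Real.log_two_gt_d9]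
  rw [Real.logb, div_le_iff₀ (by positivity : (0:ℝ) < Real.log 2)]
  nlinarith [mul_nonneg hp.le (by linarith : (0:ℝ) ≤ Real.log 2 - 2/3)]

lemma logb_ge_of_pow_le {k : ℕ} {x : ℝ} (h : (2:ℝ)^k ≤ x) : (k:ℝ) ≤ Real.logb 2 x := by
  have h0 : (0:ℝ) < 2 ^ k := by positivity
  calc (k:ℝ) = Real.logb 2 ((2:ℝ)^k) := by
        rw [Real.logb_pow, Real.logb_self_eq_one (by norm_num)]; ring
    _ ≤ Real.logb 2 x := Real.logb_le_logb_of_le (by norm_num) h0 h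


set_option maxHeartbeats 1000000 in
lemma core_ineq (A C x L G s u w mR KR lm llm Sn Sm : ℝ)
    (hC1 : 1 ≤ C) (hCA : 10*A ≤ C)
    (hx0 : 0 < x) (hL : 160000 ≤ L)
    (hu0 : 0 ≤ u) (hu4 : u^4 = L) (hG6u : G ≤ 6*u) (hG1 : 1 ≤ G)
    (hw0 : 0 ≤ w) (hw8 : w^8 = x) (hw66 : 66 ≤ w) (hL12w : L ≤ 12*w)
    (hs2 : s^2 = x) (hsw : s = w^4)
    (hm_lb : s*L ≤ mR) (hm_ub : mR ≤ s*L+1)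
    (hK : KR ≤ s/L + 1) (hK0 : 0 ≤ KR)
    (hlm_ub : lm ≤ 1 + L/2 + G) (hlm2 : 2 ≤ lm)
    (hllm_ub : llm ≤ G - 1/2) (hllm1 : 1 ≤ llm)
    (hSm0 : 0 ≤ Sm) (hSm : Sm ≤ C*mR*lm*llm)
    (hrec : Sn ≤ A*x*L + 2*KR*Sm) :
    Sn ≤ C*x*L*G := by
  have hL0 : (0:ℝ) < L := by linarith only [hL]
  have hC0 : (0:ℝ) ≤ C := by linarith only [hC1]
  have hu20 : (20:ℝ) ≤ u := by
    by_contra h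
    push_neg at h
    have h4 : u^4 < 20^4 := by
      have := pow_lt_pow_left₀ h hu0 (n := 4) (by norm_num)
      simpa using this
    rw [hu4] at h4; norm_num at h4; linarith only [h4, hL]
  have h400 : (400:ℝ) ≤ u^2 := by nlinarith only [sq_nonneg (u-20), hu20]
  have hq1 : 20*u ≤ u^2 := by
    nlinarith only [mul_nonneg hu0 (by linarith only [hu20] : (0:ℝ) ≤ u - 20)]
  have hq2 : 400*u^2 ≤ u^4 := by
    nlinarith only [mul_nonneg (by linarith only [h400] : (0:ℝ) ≤ u^2 - 400) (sq_nonneg u)]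
  have hGL : G ≤ L := by linarith only [hG6u, hq1, hq2, hu4, hu20]
  have hE3 : 1 + G ≤ L/5 := by linarith only [hG6u, hq1, hq2, hu4, hu20]
  have hq3 : G^2 ≤ 36*u^2 := by
    nlinarith only [mul_nonneg (by linarith only [hG6u, hG1] : (0:ℝ) ≤ 6*u - G)
      (by linarith only [hG6u, hG1] : (0:ℝ) ≤ 6*u + G)]
  have h5a : 2*G^2 + G ≤ L/5 := by linarith only [hq1, hq2, hq3, hG6u, hu20, hu4]
  have hw2 : (4356:ℝ) ≤ w^2 := by nlinarith only [sq_nonneg (w-66), hw66]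
  have hw4q : 4356*w^2 ≤ w^4 := by
    nlinarith only [mul_nonneg (by linarith only [hw2] : (0:ℝ) ≤ w^2 - 4356) (sq_nonneg w)]
  have hs4 : (4:ℝ) ≤ s := by rw [hsw]; linarith only [hw2, hw4q]
  have hs0 : (0:ℝ) ≤ s := by linarith only [hs4]
  have h5b : 30*L*G ≤ s := by
    have hGw : G ≤ 12*w := hGL.trans hL12w
    have hLG : L*G ≤ (12*w)*(12*w) :=
      mul_le_mul hL12w hGw (by linarith only [hG1]) (by positivity)
    rw [hsw]; nlinarith only [hw2, hw4q, hLG]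
  have hsL1 : (1:ℝ) ≤ s*L := by
    have h := mul_le_mul hs4 hL (by norm_num) hs0
    linarith only [h]
  have hmR0 : (0:ℝ) < mR := by linarith only [hsL1, hm_lb]
  have hSm2 : Sm ≤ C*(s*L+1)*(1+L/2+G)*(G-1/2) := by
    refine hSm.trans ?_
    have h1 : C*mR*lm ≤ C*(s*L+1)*(1+L/2+G) := by
      apply mul_le_mul _ hlm_ub (by linarith only [hlm2]) (by positivity)
      exact mul_le_mul_of_nonneg_left hm_ub hC0
    exact mul_le_mul h1 hllm_ub (by linarith only [hllm1]) (by positivity)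
  have hstep : 2*KR*Sm ≤ 2*((s/L+1)*(C*(s*L+1)*(1+L/2+G)*(G-1/2))) := by
    have h := mul_le_mul hK hSm2 hSm0 (by positivity)
    nlinarith only [h]
  have hss : s ≤ s*L := by
    nlinarith only [mul_nonneg hs0 (by linarith only [hL] : (0:ℝ) ≤ L - 1)]
  have hprod : (s/L+1)*(s*L+1) ≤ x + 3*(s*L) := by
    have h1 : s/L ≤ s := div_le_self hs0 (by linarith only [hL])
    have h2 : s/L*(s*L) = s*s := by field_simp
    have h3 : (s/L+1)*(s*L+1) = s/L*(s*L) + s/L + s*L + 1 := by ring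
    nlinarith only [hs2, h1, h2, h3, hsL1, hss]
  have hRT0 : (0:ℝ) ≤ (1+L/2+G)*(G-1/2) :=
    mul_nonneg (by linarith only [hL0, hG1]) (by linarith only [hG1])
  have hRL : 1+L/2+G ≤ L := by linarith only [hE3, hL]
  have key2 : x*L/10 + 2*(x+3*(s*L))*((1+L/2+G)*(G-1/2)) ≤ x*L*G := by
    have e1 : 2*x*((1+L/2+G)*(G-1/2)) = x*L*G - x*L/2 + x*(2*G^2+G-1) := by ring
    have e2 : x*(2*G^2+G-1) ≤ x*(L/5) :=
      mul_le_mul_of_nonneg_left (by linarith only [h5a]) hx0.le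
    have e3 : (1+L/2+G)*(G-1/2) ≤ L*G :=
      mul_le_mul hRL (by linarith only [hG1]) (by linarith only [hG1]) hL0.le
    have e4 : 6*(s*L)*(L*G) ≤ x*L/5 := by
      have h := mul_le_mul_of_nonneg_left h5b (show (0:ℝ) ≤ s*L/5 by positivity)
      have hx' : x*L/5 = s*L/5*s := by rw [← hs2]; ring
      rw [hx']; linarith only [h]
    have e5 : 6*(s*L)*((1+L/2+G)*(G-1/2)) ≤ 6*(s*L)*(L*G) :=
      mul_le_mul_of_nonneg_left e3 (by positivity)
    linarith only [e1, e2, e4, e5]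
  have hAx : A*x*L ≤ (C/10)*(x*L) := by
    have h := mul_le_mul_of_nonneg_right (show A ≤ C/10 by linarith only [hCA])
      (show (0:ℝ) ≤ x*L by positivity)
    nlinarith only [h]
  have hmid : (s/L+1)*(C*(s*L+1)*(1+L/2+G)*(G-1/2))
      = C*((s/L+1)*(s*L+1))*((1+L/2+G)*(G-1/2)) := by ring
  have hstep2 : C*((s/L+1)*(s*L+1))*((1+L/2+G)*(G-1/2))
      ≤ C*(x+3*(s*L))*((1+L/2+G)*(G-1/2)) := by
    apply mul_le_mul_of_nonneg_right _ hRT0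
    exact mul_le_mul_of_nonneg_left hprod hC0
  have hkeyC := mul_le_mul_of_nonneg_left key2 hC0
  nlinarith only [hkeyC, hstep2, hAx, hmid, hrec, hstep]

set_option maxHeartbeats 1000000 in
/-- If a space bound `S` (in bits) satisfies
`S n ≤ A·n·log₂ n + 2·√(n / log₂² n) · S (√(n · log₂² n))` above a threshold
`N₀` (below which `S` obeys the base-case bound), with recursion depth
`O(log log n)`, then `S n = O(n · log n · log log n)` bits, i.e.,
`O(n log log n)` words of `log n` bits. -/
theorem recurrence_space_bits (A : ℝ) (N₀ : ℕ) (S : ℕ → NNReal)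
    (hm : ∀ n, N₀ ≤ n → slabSize n < n)
    (hrec : ∀ n, N₀ ≤ n →
      (S n : ℝ) ≤ A * n * Real.logb 2 n + 2 * slabCount n * (S (slabSize n) : ℝ))
    (hbase : ∀ n, n < N₀ → (S n : ℝ) ≤ A * n + A) :
    ∃ C : ℝ, ∀ n : ℕ, 4 ≤ n →
      (S n : ℝ) ≤ C * n * Real.logb 2 n * Real.logb 2 (Real.logb 2 n) := by
  classical
  refine ⟨max (max (10*A)
      (((Finset.range (max N₀ (2^160000) + 16)).sup S : NNReal) : ℝ)) 1, ?_⟩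
  set N₁ : ℕ := max N₀ (2^160000) + 16 with hN₁def
  set C : ℝ := max (max (10*A) (((Finset.range N₁).sup S : NNReal) : ℝ)) 1 with hCdef
  have hC1 : (1:ℝ) ≤ C := le_max_right _ _
  have hC0 : (0:ℝ) ≤ C := by linarith only [hC1]
  have hCA : 10*A ≤ C := le_trans (le_max_left _ _) (le_max_left _ _)
  intro n
  induction n using Nat.strong_induction_on with
  | _ n ih =>
  intro hn4
  have hx4 : (4:ℝ) ≤ (n:ℝ) := by exact_mod_cast hn4
  have hx0 : (0:ℝ) < (n:ℝ) := by linarith only [hx4]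
  have hL2 : (2:ℝ) ≤ Real.logb 2 (n:ℝ) := by
    have h := logb_ge_of_pow_le (k := 2) (x := (n:ℝ))
      (by rw [show ((2:ℝ)^(2:ℕ)) = 4 by norm_num]; exact hx4)
    simpa using h
  have hG1 : (1:ℝ) ≤ Real.logb 2 (Real.logb 2 (n:ℝ)) := by
    calc (1:ℝ) = Real.logb 2 2 := (Real.logb_self_eq_one (by norm_num)).symm
      _ ≤ _ := Real.logb_le_logb_of_le (by norm_num) (by norm_num) hL2
  by_cases hbig : n < N₁
  · -- small case: use the finite sup
    have hle : S n ≤ (Finset.range N₁).sup S := Finset.le_sup (Finset.mem_range.2 hbig)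
    have hSle : (S n : ℝ) ≤ (((Finset.range N₁).sup S : NNReal) : ℝ) := by
      exact_mod_cast hle
    have hCbC : (((Finset.range N₁).sup S : NNReal) : ℝ) ≤ C :=
      le_trans (le_max_right _ _) (le_max_left _ _)
    have h1 : (8:ℝ) ≤ (n:ℝ) * Real.logb 2 (n:ℝ) := by
      nlinarith only [hx4, hL2]
    have h2 : (1:ℝ) ≤ (n:ℝ) * Real.logb 2 (n:ℝ) * Real.logb 2 (Real.logb 2 (n:ℝ)) := by
      nlinarith only [h1, hG1]
    calc (S n : ℝ) ≤ C := le_trans hSle hCbC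
      _ = C * 1 := (mul_one C).symm
      _ ≤ C * ((n:ℝ) * Real.logb 2 (n:ℝ) * Real.logb 2 (Real.logb 2 (n:ℝ))) :=
          mul_le_mul_of_nonneg_left h2 hC0
      _ = C * (n:ℝ) * Real.logb 2 (n:ℝ) * Real.logb 2 (Real.logb 2 (n:ℝ)) := by ring
  · push_neg at hbig
    have hnN₀ : N₀ ≤ n := le_trans (le_trans (le_max_left _ _) (Nat.le_add_right _ _)) hbig
    have hn2 : (2:ℕ)^160000 ≤ n :=
      le_trans (le_trans (le_max_right _ _) (Nat.le_add_right _ _)) hbig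
    have hx2 : (2:ℝ)^(160000:ℕ) ≤ (n:ℝ) := by exact_mod_cast hn2
    have hL : (160000:ℝ) ≤ Real.logb 2 (n:ℝ) := by
      have h := logb_ge_of_pow_le (k := 160000) hx2
      simpa using h
    have hL0 : (0:ℝ) < Real.logb 2 (n:ℝ) := by linarith only [hL]
    have hx1 : (1:ℝ) ≤ (n:ℝ) := by linarith only [hx4]
    -- fourth root of L
    have hu0 : (0:ℝ) ≤ Real.sqrt (Real.sqrt (Real.logb 2 (n:ℝ))) := Real.sqrt_nonneg _
    have hu4 : (Real.sqrt (Real.sqrt (Real.logb 2 (n:ℝ))))^4 = Real.logb 2 (n:ℝ) := by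
      rw [show ∀ a : ℝ, a^4 = (a^2)^2 from fun a => by ring,
        Real.sq_sqrt (Real.sqrt_nonneg _), Real.sq_sqrt hL0.le]
    have hG6u : Real.logb 2 (Real.logb 2 (n:ℝ))
        ≤ 6 * Real.sqrt (Real.sqrt (Real.logb 2 (n:ℝ))) := logb4_le (by linarith only [hL])
    -- eighth root of x
    have hw0 : (0:ℝ) ≤ Real.sqrt (Real.sqrt (Real.sqrt (n:ℝ))) := Real.sqrt_nonneg _
    have hw8 : (Real.sqrt (Real.sqrt (Real.sqrt (n:ℝ))))^8 = (n:ℝ) := by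
      rw [show ∀ a : ℝ, a^8 = ((a^2)^2)^2 from fun a => by ring,
        Real.sq_sqrt (Real.sqrt_nonneg _), Real.sq_sqrt (Real.sqrt_nonneg _),
        Real.sq_sqrt hx0.le]
    have h668 : ((66:ℕ)^8 : ℕ) ≤ n := by
      refine le_trans ?_ hn2
      calc (66:ℕ)^8 ≤ 2^56 := by norm_num
        _ ≤ 2^160000 := Nat.pow_le_pow_right (by norm_num) (by norm_num)
    have hw66 : (66:ℝ) ≤ Real.sqrt (Real.sqrt (Real.sqrt (n:ℝ))) := by
      refine le_of_pow_le_pow_left₀ (n := 8) (by norm_num) hw0 ?_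
      rw [hw8]
      calc ((66:ℝ))^8 = (((66:ℕ)^8 : ℕ) : ℝ) := by push_cast; ring
        _ ≤ (n:ℝ) := by exact_mod_cast h668
    have hL12w : Real.logb 2 (n:ℝ)
        ≤ 12 * Real.sqrt (Real.sqrt (Real.sqrt (n:ℝ))) := logb8_le hx1
    have hs2 : (Real.sqrt (n:ℝ))^2 = (n:ℝ) := Real.sq_sqrt hx0.le
    have hsw : Real.sqrt (n:ℝ) = (Real.sqrt (Real.sqrt (Real.sqrt (n:ℝ))))^4 := by
      have hxw : (n:ℝ) = ((Real.sqrt (Real.sqrt (Real.sqrt (n:ℝ))))^4)^2 := by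
        rw [show ((Real.sqrt (Real.sqrt (Real.sqrt (n:ℝ))))^4)^2
          = (Real.sqrt (Real.sqrt (Real.sqrt (n:ℝ))))^8 from by ring, hw8]
      conv_lhs => rw [hxw]
      rw [Real.sqrt_sq (by positivity)]
    have hs0 : (0:ℝ) ≤ Real.sqrt (n:ℝ) := Real.sqrt_nonneg _
    have hs4 : (4:ℝ) ≤ Real.sqrt (n:ℝ) := by
      rw [show (4:ℝ) = Real.sqrt 16 by
        rw [show (16:ℝ) = 4^2 by norm_num, Real.sqrt_sq (by norm_num)]]
      apply Real.sqrt_le_sqrt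
      calc (16:ℝ) = (((2:ℕ)^4 : ℕ) : ℝ) := by push_cast; norm_num
        _ ≤ (n:ℝ) := by
            exact_mod_cast le_trans (Nat.pow_le_pow_right (by norm_num) (by norm_num)) hn2
    -- slab size facts
    have hsqm : Real.sqrt ((n:ℝ) * (Real.logb 2 (n:ℝ))^2)
        = Real.sqrt (n:ℝ) * Real.logb 2 (n:ℝ) := by
      rw [Real.sqrt_mul hx0.le, Real.sqrt_sq hL0.le]
    have hm_lb : Real.sqrt (n:ℝ) * Real.logb 2 (n:ℝ) ≤ ((slabSize n : ℕ) : ℝ) := by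
      rw [slabSize, ← hsqm]
      exact Nat.le_ceil _
    have hm_ub : ((slabSize n : ℕ) : ℝ) ≤ Real.sqrt (n:ℝ) * Real.logb 2 (n:ℝ) + 1 := by
      rw [slabSize]
      have h := Nat.ceil_lt_add_one
        (by positivity : (0:ℝ) ≤ Real.sqrt ((n:ℝ) * (Real.logb 2 (n:ℝ))^2))
      rw [← hsqm]
      exact h.le
    have hsL1 : (1:ℝ) ≤ Real.sqrt (n:ℝ) * Real.logb 2 (n:ℝ) := by
      have h := mul_le_mul hs4 hL (by norm_num) hs0
      linarith only [h]
    have hm4R : (4:ℝ) ≤ ((slabSize n : ℕ) : ℝ) := by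
      have h := mul_le_mul hs4 hL (by norm_num) hs0
      linarith only [h, hm_lb]
    have hm4 : 4 ≤ slabSize n := by exact_mod_cast hm4R
    have hmR0 : (0:ℝ) < ((slabSize n : ℕ) : ℝ) := by linarith only [hm4R]
    have hmlt : slabSize n < n := hm n hnN₀
    have hSm := ih (slabSize n) hmlt hm4
    -- log of slab size
    have hlogbs : Real.logb 2 (Real.sqrt (n:ℝ)) = Real.logb 2 (n:ℝ) / 2 := by
      rw [Real.logb, Real.logb, Real.log_sqrt hx0.le]; ring
    have hlm_ub : Real.logb 2 ((slabSize n : ℕ) : ℝ)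
        ≤ 1 + Real.logb 2 (n:ℝ)/2 + Real.logb 2 (Real.logb 2 (n:ℝ)) := by
      have h2sL : ((slabSize n : ℕ) : ℝ) ≤ 2*(Real.sqrt (n:ℝ) * Real.logb 2 (n:ℝ)) := by
        linarith only [hm_ub, hsL1]
      have hmono : Real.logb 2 ((slabSize n : ℕ) : ℝ)
          ≤ Real.logb 2 (2*(Real.sqrt (n:ℝ) * Real.logb 2 (n:ℝ))) :=
        Real.logb_le_logb_of_le (by norm_num) hmR0 h2sL
      have heq : Real.logb 2 (2*(Real.sqrt (n:ℝ) * Real.logb 2 (n:ℝ)))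
          = 1 + Real.logb 2 (n:ℝ)/2 + Real.logb 2 (Real.logb 2 (n:ℝ)) := by
        rw [Real.logb_mul (by norm_num) (by positivity),
          Real.logb_mul (by positivity) (by positivity),
          Real.logb_self_eq_one (by norm_num), hlogbs]
        ring
      linarith only [hmono, heq.le, heq.ge]
    have hlm2 : (2:ℝ) ≤ Real.logb 2 ((slabSize n : ℕ) : ℝ) := by
      have h4 : Real.logb 2 (4:ℝ) ≤ Real.logb 2 ((slabSize n : ℕ) : ℝ) :=
        Real.logb_le_logb_of_le (by norm_num) (by norm_num) hm4R
      have he : Real.logb 2 (4:ℝ) = 2 := by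
        rw [show (4:ℝ) = 2^(2:ℕ) by norm_num, Real.logb_pow,
          Real.logb_self_eq_one (by norm_num)]
        norm_num
      linarith only [h4, he.le, he.ge]
    have hllm1 : (1:ℝ) ≤ Real.logb 2 (Real.logb 2 ((slabSize n : ℕ) : ℝ)) := by
      have h := Real.logb_le_logb_of_le (b := 2) (by norm_num) (by norm_num : (0:ℝ) < 2) hlm2
      rw [Real.logb_self_eq_one (by norm_num)] at h
      exact h
    have h710 : Real.logb 2 ((7:ℝ)/10) ≤ -(1/2) := by
      have hsq2 : Real.sqrt 2 ≤ 10/7 := by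
        nlinarith only [Real.sq_sqrt (by norm_num : (0:ℝ) ≤ 2), Real.sqrt_nonneg 2]
      have hsq2' : (0:ℝ) < Real.sqrt 2 := Real.sqrt_pos.2 (by norm_num)
      have h1 : (7:ℝ)/10 ≤ 1/Real.sqrt 2 := by
        rw [le_div_iff₀ hsq2']; nlinarith only [hsq2]
      have h2 : Real.log ((7:ℝ)/10) ≤ Real.log (1/Real.sqrt 2) :=
        Real.log_le_log (by norm_num) h1
      have h3 : Real.log (1/Real.sqrt 2) = -(Real.log 2)/2 := by
        rw [one_div, Real.log_inv, Real.log_sqrt (by norm_num : (0:ℝ) ≤ 2)]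
        ring
      rw [Real.logb, div_le_iff₀ (by positivity : (0:ℝ) < Real.log 2)]
      nlinarith only [h2, h3, Real.log_pos (by norm_num : (1:ℝ) < 2)]
    -- E3 : 1 + G ≤ L/5, needed for the 7/10 bound
    have hu20 : (20:ℝ) ≤ Real.sqrt (Real.sqrt (Real.logb 2 (n:ℝ))) := by
      by_contra h
      push_neg at h
      have h4 : (Real.sqrt (Real.sqrt (Real.logb 2 (n:ℝ))))^4 < 20^4 := by
        have := pow_lt_pow_left₀ h hu0 (n := 4) (by norm_num)
        simpa using this
      rw [hu4] at h4; norm_num at h4; linarith only [h4, hL]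
    have hE3 : 1 + Real.logb 2 (Real.logb 2 (n:ℝ)) ≤ Real.logb 2 (n:ℝ)/5 := by
      have hq1 : 20*Real.sqrt (Real.sqrt (Real.logb 2 (n:ℝ)))
          ≤ (Real.sqrt (Real.sqrt (Real.logb 2 (n:ℝ))))^2 := by
        nlinarith only [mul_nonneg hu0 (by linarith only [hu20] :
          (0:ℝ) ≤ Real.sqrt (Real.sqrt (Real.logb 2 (n:ℝ))) - 20)]
      have h400 : (400:ℝ) ≤ (Real.sqrt (Real.sqrt (Real.logb 2 (n:ℝ))))^2 := by
        nlinarith only [sq_nonneg (Real.sqrt (Real.sqrt (Real.logb 2 (n:ℝ))) - 20), hu20]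
      have hq2 : 400*(Real.sqrt (Real.sqrt (Real.logb 2 (n:ℝ))))^2
          ≤ (Real.sqrt (Real.sqrt (Real.logb 2 (n:ℝ))))^4 := by
        nlinarith only [mul_nonneg (by linarith only [h400] :
          (0:ℝ) ≤ (Real.sqrt (Real.sqrt (Real.logb 2 (n:ℝ))))^2 - 400)
          (sq_nonneg (Real.sqrt (Real.sqrt (Real.logb 2 (n:ℝ)))))]
      linarith only [hG6u, hq1, hq2, hu4.le, hu4.ge, hu20]
    have hllm_ub : Real.logb 2 (Real.logb 2 ((slabSize n : ℕ) : ℝ))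
        ≤ Real.logb 2 (Real.logb 2 (n:ℝ)) - 1/2 := by
      have hlm7 : Real.logb 2 ((slabSize n : ℕ) : ℝ) ≤ (7/10)*Real.logb 2 (n:ℝ) := by
        linarith only [hlm_ub, hE3]
      have hmono : Real.logb 2 (Real.logb 2 ((slabSize n : ℕ) : ℝ))
          ≤ Real.logb 2 ((7/10)*Real.logb 2 (n:ℝ)) :=
        Real.logb_le_logb_of_le (by norm_num) (by linarith only [hlm2]) hlm7
      have heq : Real.logb 2 ((7/10)*Real.logb 2 (n:ℝ))
          = Real.logb 2 ((7:ℝ)/10) + Real.logb 2 (Real.logb 2 (n:ℝ)) :=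
        Real.logb_mul (by norm_num) (by positivity)
      linarith only [hmono, heq.le, h710]
    -- slab count
    have hK : ((slabCount n : ℕ) : ℝ) ≤ Real.sqrt (n:ℝ) / Real.logb 2 (n:ℝ) + 1 := by
      rw [slabCount]
      have hdiv : Real.sqrt ((n:ℝ) / (Real.logb 2 (n:ℝ))^2)
          = Real.sqrt (n:ℝ) / Real.logb 2 (n:ℝ) := by
        rw [Real.sqrt_div hx0.le, Real.sqrt_sq hL0.le]
      have h := Nat.ceil_lt_add_one
        (by positivity : (0:ℝ) ≤ Real.sqrt ((n:ℝ) / (Real.logb 2 (n:ℝ))^2))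
      rw [← hdiv]
      exact h.le
    have hK0 : (0:ℝ) ≤ ((slabCount n : ℕ) : ℝ) := by positivity
    have hrec' := hrec n hnN₀
    exact core_ineq A C (n:ℝ) (Real.logb 2 (n:ℝ)) (Real.logb 2 (Real.logb 2 (n:ℝ)))
      (Real.sqrt (n:ℝ)) (Real.sqrt (Real.sqrt (Real.logb 2 (n:ℝ))))
      (Real.sqrt (Real.sqrt (Real.sqrt (n:ℝ)))) ((slabSize n : ℕ) : ℝ)
      ((slabCount n : ℕ) : ℝ) (Real.logb 2 ((slabSize n : ℕ) : ℝ))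
      (Real.logb 2 (Real.logb 2 ((slabSize n : ℕ) : ℝ))) ((S n : ℝ)) ((S (slabSize n) : ℝ))
      hC1 hCA hx0 hL hu0 hu4 hG6u hG1 hw0 hw8 hw66 hL12w hs2 hsw hm_lb hm_ub hK hK0
      hlm_ub hlm2 hllm_ub hllm1 (S (slabSize n)).coe_nonneg
      (by calc ((S (slabSize n)):ℝ)
            ≤ C * (slabSize n : ℕ) * Real.logb 2 ((slabSize n : ℕ) : ℝ)
              * Real.logb 2 (Real.logb 2 ((slabSize n : ℕ) : ℝ)) := hSm
          _ = C*((slabSize n : ℕ) : ℝ)*Real.logb 2 ((slabSize n : ℕ) : ℝ)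
              *Real.logb 2 (Real.logb 2 ((slabSize n : ℕ) : ℝ)) := by ring)
      (by calc ((S n):ℝ) ≤ A * n * Real.logb 2 n
              + 2 * slabCount n * (S (slabSize n) : ℝ) := hrec'
          _ = A*(n:ℝ)*Real.logb 2 (n:ℝ)
              + 2*((slabCount n : ℕ) : ℝ)*((S (slabSize n)):ℝ) := by ring)
      |>.trans_eq (by ring)
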